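/- arXiv:2003.13940 — 2 statements merged into one kernel-verified Lean document; each statement's English description precedes it below -/
import Mathlib

section
/- Let φ be an injective endomorphism of the free group F_n, let W be an attracting fixed word of φ, and let U ∈ fix(φ). Then the infinite reduced word UW (obtained by left multiplying W by U and freely reducing) is also an attracting fixed word of φ. -/
open Filter

namespace ZZFix

/-- A letter: a basis element together with a sign. -/
abbrev Letter (α : Type*) := α × Bool

/-- The inverse letter. -/
def linv {α : Type*} (l : Letter α) : Letter α := (l.1, !l.2)

/-- An infinite reduced word: a sequence of letters with no adjacent cancellation. -/
def InfWord (α : Type*) : Type _ := {w : ℕ → Letter α // ∀ i, w (i + 1) ≠ linv (w i)}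

/-- The length-`i` prefix of an infinite reduced word, as a list of letters. -/
def prefixList {α : Type*} (W : InfWord α) (i : ℕ) : List (Letter α) :=
  (List.range i).map W.1

/-- The length-`i` prefix of an infinite reduced word, as an element of the free group. -/
def wordPrefix {α : Type*} (W : InfWord α) (i : ℕ) : FreeGroup α :=
  FreeGroup.mk (prefixList W i)

/-- Length of the longest common prefix of two lists. -/
def commonPrefixLength {β : Type*} [DecidableEq β] : List β → List β → ℕ
  | a :: as, b :: bs => if a = b then commonPrefixLength as bs + 1 else 0
  | _, _ => 0

variable {α : Type*} [DecidableEq α]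

/-- `|W ∧ g|` for an infinite reduced word `W` and a finite reduced word `g`. -/
def wedgeF (W : InfWord α) (g : FreeGroup α) : ℕ :=
  commonPrefixLength (prefixList W (FreeGroup.toWord g).length) (FreeGroup.toWord g)

/-- `|g ∧ h|` for finite reduced words. -/
def wedgeFF (g h : FreeGroup α) : ℕ :=
  commonPrefixLength (FreeGroup.toWord g) (FreeGroup.toWord h)

/-- `|W ∧ V|` for infinite reduced words, valued in `ℕ∞` (it is `⊤` iff `W = V`). -/
noncomputable def wedgeI {α : Type*} (W V : InfWord α) : ℕ∞ :=
  sSup ((fun i : ℕ => (i : ℕ∞)) '' {i : ℕ | prefixList W i = prefixList V i})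

/-- A sequence of group elements converges to the infinite reduced word `W`
(in the initial segment metric on `F ⊔ ∂F`). -/
def ConvergesTo (u : ℕ → FreeGroup α) (W : InfWord α) : Prop :=
  Tendsto (fun i => wedgeF W (u i)) atTop atTop

/-- `W` is a fixed infinite word of `φ`: `|W ∧ φ(W_i)| → ∞`. -/
def IsFixedInfWord (φ : FreeGroup α →* FreeGroup α) (W : InfWord α) : Prop :=
  Tendsto (fun i => wedgeF W (φ (wordPrefix W i))) atTop atTop

/-- `W` is an attracting fixed word of `φ`: it is fixed and `|W ∧ φ(W_i)| - i → +∞`. -/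
def IsAttractingFixedWord (φ : FreeGroup α →* FreeGroup α) (W : InfWord α) : Prop :=
  IsFixedInfWord φ W ∧
    Tendsto (fun i => (wedgeF W (φ (wordPrefix W i)) : ℤ) - (i : ℤ)) atTop atTop

/-- The fixed subgroup of an endomorphism. -/
def fixedSubgroup {G : Type*} [Group G] (φ : G →* G) : Subgroup G where
  carrier := {g | φ g = g}
  one_mem' := map_one φ
  mul_mem' := by
    intro a b ha hb
    simp only [Set.mem_setOf_eq] at *
    rw [map_mul, ha, hb]
  inv_mem' := by
    intro a ha
    simp only [Set.mem_setOf_eq] at *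
    rw [map_inv, ha]

/-- The rank (minimal number of generators) of a subgroup, valued in `ℕ∞`. -/
noncomputable def grpRank {G : Type*} [Group G] (H : Subgroup G) : ℕ∞ :=
  sInf {k : ℕ∞ | ∃ S : Finset G, Subgroup.closure (S : Set G) = H ∧ (S.card : ℕ∞) = k}

/-- Two infinite reduced words are equivalent (w.r.t. `φ`) if `W' = U·W` for some
`U ∈ fix(φ)`, i.e. the reduced products `U·W_i` converge to `W'`. -/
def EquivFixedWords (φ : FreeGroup α →* FreeGroup α) (W W' : InfWord α) : Prop :=
  ∃ U ∈ fixedSubgroup φ, ConvergesTo (fun i => U * wordPrefix W i) W'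

/-- `a(φ)`: the number of equivalence classes of attracting fixed words, in `ℕ∞`. -/
noncomputable def aCard (φ : FreeGroup α →* FreeGroup α) : ℕ∞ :=
  ENat.card (Quot fun (W W' : {W : InfWord α // IsAttractingFixedWord φ W}) =>
    EquivFixedWords φ W.1 W'.1)

/-- The inner automorphism `i_c : g ↦ c g c⁻¹`, as a monoid homomorphism. -/
def innerAut {G : Type*} [Group G] (c : G) : G →* G := (MulAut.conj c).toMonoidHom

/-- Two endomorphisms are similar if `ψ₂ = i_c ∘ ψ₁ ∘ i_c⁻¹` for some `c`. -/
def Similar {G : Type*} [Group G] (ψ₁ ψ₂ : G →* G) : Prop :=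
  ∃ c : G, ψ₂ = ((innerAut c).comp ψ₁).comp (innerAut c⁻¹)

/-- The trace of the endomorphism of `ℤⁿ` induced by `φ` on the abelianization. -/
def abTrace {n : ℕ} (φ : FreeGroup (Fin n) →* FreeGroup (Fin n)) : ℤ :=
  ∑ i : Fin n, Multiplicative.toAdd
    ((FreeGroup.lift fun k => Multiplicative.ofAdd (if k = i then (1 : ℤ) else 0))
      (φ (FreeGroup.of i)))

/-- The constant infinite reduced word `l l l ⋯`. -/
def constWord {α : Type*} (l : Letter α) : InfWord α :=
  ⟨fun _ => l, fun _ h => by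
    have h2 := congrArg Prod.snd h
    simp [linv] at h2⟩

/-- `W` is an attracting fixed point of `φ`: it is fixed, and there is `i₀` such that
every finite or infinite reduced word `V` with `|W ∧ V| ≥ i₀` satisfies
`|W ∧ φᵖ(V)| → ∞` as `p → ∞`. -/
def IsAttractingFixedPoint (φ : FreeGroup α →* FreeGroup α) (W : InfWord α) : Prop :=
  IsFixedInfWord φ W ∧
    ∃ i₀ : ℕ,
      (∀ g : FreeGroup α, i₀ ≤ wedgeF W g →
        Tendsto (fun p => wedgeF W ((⇑φ)^[p] g)) atTop atTop) ∧
      (∀ V : InfWord α, (i₀ : ℕ∞) ≤ wedgeI W V →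
        ∀ Vs : ℕ → InfWord α, Vs 0 = V →
          (∀ p, ConvergesTo (fun i => φ (wordPrefix (Vs p) i)) (Vs (p + 1))) →
          Tendsto (fun p => wedgeI W (Vs p)) atTop atTop)

open scoped Classical in
/-- The initial segment metric. -/
noncomputable def distIS {α : Type*} (W V : InfWord α) : ℝ :=
  if W = V then 0 else 1 / (1 + ((wedgeI W V).toNat : ℝ))



/-! ### Auxiliary lemmas for Statement 8 -/

section Aux

variable {β : Type*} [DecidableEq β]

@[simp] lemma linv_linv (l : Letter β) : linv (linv l) = l := by simp [linv]

/-- A list of letters is reduced. -/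
def Rd (L : List (Letter β)) : Prop := List.Chain' (fun a b => b ≠ linv a) L

lemma rd_reduce {L : List (Letter β)} (h : Rd L) : FreeGroup.reduce L = L := by
  induction L with
  | nil => rfl
  | cons x L ih =>
    have hL : Rd L := (List.isChain_cons.mp h).2
    have hx : ∀ y ∈ L.head?, y ≠ linv x := (List.isChain_cons.mp h).1
    rw [FreeGroup.reduce.cons, ih hL]
    cases L with
    | nil => rfl
    | cons y ys =>
      have hy : y ≠ linv x := hx y rfl
      have : ¬(x.1 = y.1 ∧ x.2 = !y.2) := by
        rintro ⟨h1, h2⟩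
        exact hy (by simp [linv, ← h1]; cases x; cases y; simp_all)
      simp only [this, if_false]

lemma rd_of_reduce (L : List (Letter β)) : Rd (FreeGroup.reduce L) := by
  induction L with
  | nil => exact List.isChain_nil
  | cons x L ih =>
    rw [FreeGroup.reduce.cons]
    rcases h : FreeGroup.reduce L with _ | ⟨y, ys⟩
    · exact List.isChain_singleton x
    · rw [h] at ih
      by_cases hc : x.1 = y.1 ∧ x.2 = !y.2
      · simp only [hc, if_true]
        exact ih.tail
      · simp only [hc, if_false]
        refine List.isChain_cons.mpr ⟨?_, ih⟩
        intro z hz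
        simp only [List.head?_cons, Option.mem_def, Option.some.injEq] at hz
        subst hz
        intro hzz
        apply hc
        rw [hzz]
        exact ⟨rfl, by simp [linv]⟩

lemma rd_toWord (g : FreeGroup β) : Rd g.toWord := by
  have := rd_of_reduce g.toWord
  rwa [FreeGroup.reduce_toWord] at this

lemma rd_append {A B : List (Letter β)} (hA : Rd A) (hB : Rd B)
    (h : ∀ a ∈ A.getLast?, ∀ b ∈ B.head?, b ≠ linv a) : Rd (A ++ B) :=
  List.isChain_append.mpr ⟨hA, hB, h⟩

lemma invRev_cons_of_invRev (C : List (Letter β)) (a : Letter β) :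
    FreeGroup.invRev (C ++ [a]) = linv a :: FreeGroup.invRev C := by
  simp [FreeGroup.invRev, linv]

lemma mk_linv_mul (a : Letter β) (g : FreeGroup β) :
    FreeGroup.mk [a] * FreeGroup.mk [linv a] * g = g := by
  have : FreeGroup.mk [linv a] = (FreeGroup.mk [a])⁻¹ := by
    rw [FreeGroup.inv_mk]
    simp [FreeGroup.invRev, linv]
  rw [this, mul_inv_cancel, one_mul]

/-- The cancellation lemma for products of reduced words. -/
lemma canc (A : List (Letter β)) : ∀ B : List (Letter β), Rd A → Rd B →
    ∃ A₁ C B₁ : List (Letter β), A = A₁ ++ C ∧ B = FreeGroup.invRev C ++ B₁ ∧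
      (FreeGroup.mk A * FreeGroup.mk B).toWord = A₁ ++ B₁ ∧ Rd (A₁ ++ B₁) := by
  induction A using List.reverseRecOn with
  | nil =>
    intro B _ hB
    refine ⟨[], [], B, rfl, by simp [FreeGroup.invRev], ?_, hB⟩
    rw [← FreeGroup.one_eq_mk, one_mul, FreeGroup.toWord_mk, rd_reduce hB, List.nil_append]
  | append_singleton A₀ a ih =>
    intro B hA hB
    have hA₀ : Rd A₀ := (List.isChain_append.mp hA).1
    rcases B with _ | ⟨b, B'⟩
    · refine ⟨A₀ ++ [a], [], [], by simp, by simp [FreeGroup.invRev], ?_, by simpa using hA⟩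
      rw [← FreeGroup.one_eq_mk, mul_one, FreeGroup.toWord_mk, rd_reduce hA, List.append_nil]
    · by_cases hb : b = linv a
      · subst hb
        have hB' : Rd B' := (List.isChain_cons.mp hB).2
        obtain ⟨A₁, C, B₁, h1, h2, h3, h4⟩ := ih B' hA₀ hB'
        refine ⟨A₁, C ++ [a], B₁, by rw [h1, List.append_assoc], ?_, ?_, h4⟩
        · rw [invRev_cons_of_invRev, List.cons_append, h2]
        · rw [← h3]
          congr 1
          calc FreeGroup.mk (A₀ ++ [a]) * FreeGroup.mk (linv a :: B')
              = FreeGroup.mk A₀ * (FreeGroup.mk [a] * FreeGroup.mk [linv a] *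
                  FreeGroup.mk B') := by
                rw [FreeGroup.mul_mk, FreeGroup.mul_mk, FreeGroup.mul_mk, FreeGroup.mul_mk]
                simp
            _ = FreeGroup.mk A₀ * FreeGroup.mk B' := by rw [mk_linv_mul]
      · have hrd : Rd ((A₀ ++ [a]) ++ (b :: B')) := by
          refine rd_append hA hB ?_
          intro x hx y hy
          simp only [List.getLast?_concat, Option.mem_def, Option.some.injEq] at hx
          simp only [List.head?_cons, Option.mem_def, Option.some.injEq] at hy
          subst hx; subst hy; exact hb
        refine ⟨A₀ ++ [a], [], b :: B', by simp, by simp [FreeGroup.invRev], ?_, hrd⟩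
        rw [FreeGroup.mul_mk, FreeGroup.toWord_mk, rd_reduce hrd]

lemma le_commonPrefixLength_iff (L : List (Letter β)) : ∀ (M : List (Letter β)) (m : ℕ),
    m ≤ commonPrefixLength L M ↔ m ≤ L.length ∧ m ≤ M.length ∧ L.take m = M.take m := by
  induction L with
  | nil =>
    intro M m
    simp only [commonPrefixLength, List.length_nil, Nat.le_zero, List.take_nil]
    constructor
    · rintro rfl; simp
    · rintro ⟨rfl, -, -⟩; rfl
  | cons a as ih =>
    intro M m
    rcases M with _ | ⟨b, bs⟩
    · simp only [commonPrefixLength, List.length_nil, Nat.le_zero, List.take_nil]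
      constructor
      · rintro rfl; simp
      · rintro ⟨-, rfl, -⟩; rfl
    · rcases m with _ | m
      · simp
      · simp only [commonPrefixLength, List.length_cons, Nat.succ_le_succ_iff,
          List.take_succ_cons, List.cons.injEq]
        by_cases hab : a = b
        · subst hab
          rw [if_pos rfl]
          simp only [Nat.succ_le_succ_iff, ih bs m, true_and]
        · simp only [if_neg hab]
          constructor
          · omega
          · rintro ⟨-, -, rfl, -⟩; exact absurd rfl hab

end Aux

section Aux2

variable {α : Type*} [DecidableEq α]

lemma prefixList_length (W : InfWord α) (i : ℕ) : (prefixList W i).length = i := by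
  simp [prefixList]

lemma take_prefixList (W : InfWord α) {m N : ℕ} (h : m ≤ N) :
    (prefixList W N).take m = prefixList W m := by
  rw [prefixList, prefixList, ← List.map_take, List.take_range, min_eq_left h]

lemma getElem?_prefixList (W : InfWord α) {m i : ℕ} (h : m < i) :
    (prefixList W i)[m]? = some (W.1 m) := by
  simp [prefixList, List.getElem?_range h]

lemma rd_prefixList (W : InfWord α) (i : ℕ) : Rd (prefixList W i) := by
  rw [prefixList, Rd, List.Chain', List.isChain_map]
  rcases i with _ | i
  · simp
  · rw [List.isChain_range_succ]
    intro m _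
    exact W.2 m

lemma toWord_wordPrefix (W : InfWord α) (i : ℕ) :
    (wordPrefix W i).toWord = prefixList W i := by
  rw [wordPrefix, FreeGroup.toWord_mk, rd_reduce (rd_prefixList W i)]

lemma le_wedgeF_iff (W : InfWord α) (g : FreeGroup α) (m : ℕ) :
    m ≤ wedgeF W g ↔ prefixList W m <+: g.toWord := by
  rw [wedgeF, le_commonPrefixLength_iff]
  constructor
  · rintro ⟨h1, h2, h3⟩
    rw [prefixList_length] at h1
    rw [List.prefix_iff_eq_take, prefixList_length, ← h3, take_prefixList W h1]
  · intro h
    have hm : m ≤ g.toWord.length := by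
      simpa [prefixList_length] using h.length_le
    have heq := List.prefix_iff_eq_take.mp h
    rw [prefixList_length] at heq
    refine ⟨by rw [prefixList_length]; exact hm, hm, ?_⟩
    rw [take_prefixList W hm, heq]

end Aux2

/-- any word equivalent to an attracting fixed word of `φ` is again an
attracting fixed word of `φ`. -/
theorem stmt8 {n : ℕ} (φ : FreeGroup (Fin n) →* FreeGroup (Fin n))
    (hφ : Function.Injective φ) (W W' : InfWord (Fin n)) (U : FreeGroup (Fin n))
    (hW : IsAttractingFixedWord φ W) (hU : U ∈ fixedSubgroup φ)
    (hW' : ConvergesTo (fun i => U * wordPrefix W i) W') :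
    IsAttractingFixedWord φ W' := by
  obtain ⟨hWfix', hWatt'⟩ := hW
  have hWfix : Tendsto (fun i => wedgeF W (φ (wordPrefix W i))) atTop atTop := hWfix'
  have hWatt : Tendsto (fun i => (wedgeF W (φ (wordPrefix W i)) : ℤ) - (i : ℤ)) atTop atTop :=
    hWatt'
  have hConv : Tendsto (fun i => wedgeF W' (U * wordPrefix W i)) atTop atTop := hW'
  have hUfix : φ U = U := hU
  obtain ⟨A₁, C, B₁, hAeq, hBeq, htw, hrd⟩ :=
    canc U.toWord (prefixList W (U.toWord.length + 1)) (rd_toWord U)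
      (rd_prefixList W (U.toWord.length + 1))
  set i₀ := U.toWord.length + 1 with hi₀
  set d := C.length with hddef
  set k := A₁.length with hkdef
  have hdA : d ≤ U.toWord.length := by
    have := congrArg List.length hAeq
    simp only [List.length_append] at this
    omega
  have hdi₀ : d < i₀ := by omega
  -- `invRev C` is the length-`d` prefix of `W`.
  have hlenC : (FreeGroup.invRev C).length = d := by
    rw [FreeGroup.invRev_length]
  have hC : FreeGroup.invRev C = prefixList W d := by
    have h1 : FreeGroup.invRev C = (prefixList W i₀).take d := by
      rw [hBeq, ← hlenC, List.take_left]
    rw [h1, take_prefixList W (le_of_lt hdi₀)]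
  have hhead : ∀ i, d < i → ((prefixList W i).drop d).head? = some (W.1 d) := by
    intro i hi
    rw [List.head?_drop, getElem?_prefixList W hi]
  have hB₁ : B₁ = (prefixList W i₀).drop d := by
    rw [hBeq, ← hlenC, List.drop_left]
  have hrdA₁ : Rd A₁ := (List.isChain_append.mp hrd).1
  have hjunc : ∀ x ∈ A₁.getLast?, W.1 d ≠ linv x := by
    intro x hx
    refine (List.isChain_append.mp hrd).2.2 x hx (W.1 d) ?_
    rw [hB₁]
    exact hhead i₀ hdi₀
  -- Master computation: the reduced word of `U * g`.
  have hM : ∀ (g : FreeGroup (Fin n)) (m : ℕ), d < m → prefixList W m <+: g.toWord →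
      (U * g).toWord = A₁ ++ g.toWord.drop d := by
    intro g m hdm hpre
    obtain ⟨R, hR⟩ := hpre
    have hlen : (prefixList W m).length = m := prefixList_length W m
    have hg1 : g.toWord.take d = FreeGroup.invRev C := by
      rw [← hR, List.take_append_of_le_length (by omega), take_prefixList W (by omega), hC]
    have hgsplit : g.toWord = FreeGroup.invRev C ++ g.toWord.drop d := by
      conv_lhs => rw [← List.take_append_drop d g.toWord]
      rw [hg1]
    have hheadg : (g.toWord.drop d).head? = some (W.1 d) := by
      rw [List.head?_drop, ← hR, List.getElem?_append_left (by omega),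
        getElem?_prefixList W hdm]
    have hRd2 : Rd (A₁ ++ g.toWord.drop d) := by
      refine rd_append hrdA₁ ((rd_toWord g).drop d) ?_
      intro x hx y hy
      rw [hheadg, Option.mem_def, Option.some.injEq] at hy
      subst hy
      exact hjunc x hx
    have hCC : FreeGroup.mk C * FreeGroup.mk (FreeGroup.invRev C) = 1 := by
      rw [← FreeGroup.inv_mk, mul_inv_cancel]
    have hmul : U * g = FreeGroup.mk A₁ * FreeGroup.mk (g.toWord.drop d) := by
      calc U * g = (FreeGroup.mk A₁ * FreeGroup.mk C) *
          (FreeGroup.mk (FreeGroup.invRev C) * FreeGroup.mk (g.toWord.drop d)) := by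
            rw [FreeGroup.mul_mk, FreeGroup.mul_mk, ← hAeq, ← hgsplit,
              FreeGroup.mk_toWord, FreeGroup.mk_toWord]
        _ = FreeGroup.mk A₁ * FreeGroup.mk (g.toWord.drop d) := by
            rw [mul_assoc, ← mul_assoc (FreeGroup.mk C), hCC, one_mul]
    rw [hmul, FreeGroup.mul_mk, FreeGroup.toWord_mk, rd_reduce hRd2]
  -- The prefixes of `W'`.
  have hII : ∀ t, 1 ≤ t → prefixList W' (k + t) = A₁ ++ (prefixList W (d + t)).drop d := by
    intro t ht
    obtain ⟨i, hi1, hi2⟩ := ((hConv.eventually_ge_atTop (k + t)).and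
      (eventually_ge_atTop (max i₀ (d + t)))).exists
    have hii₀ : i₀ ≤ i := le_trans (le_max_left _ _) hi2
    have hidt : d + t ≤ i := le_trans (le_max_right _ _) hi2
    have hpre : prefixList W (d + t) <+: (wordPrefix W i).toWord := by
      rw [toWord_wordPrefix, ← take_prefixList W hidt]
      exact List.take_prefix _ _
    have hMi := hM (wordPrefix W i) (d + t) (by omega) hpre
    rw [toWord_wordPrefix] at hMi
    have hpre' : prefixList W' (k + t) <+: A₁ ++ (prefixList W i).drop d := by
      rw [← hMi]
      exact (le_wedgeF_iff W' _ _).mp hi1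
    have heq := List.prefix_iff_eq_take.mp hpre'
    rw [prefixList_length] at heq
    rw [heq, List.take_append, List.take_of_length_le (by omega), ← hkdef, Nat.add_sub_cancel_left]
    congr 1
    rw [← take_prefixList W hidt, List.drop_take, Nat.add_sub_cancel_left]
  -- The key inequality.
  have hIII : ∀ (g : FreeGroup (Fin n)) (m : ℕ), d < m → m ≤ wedgeF W g →
      k + (m - d) ≤ wedgeF W' (U * g) := by
    intro g m hdm hm
    obtain ⟨R, hR⟩ := (le_wedgeF_iff W g m).mp hm
    have hMg : (U * g).toWord = A₁ ++ g.toWord.drop d := hM g m hdm ⟨R, hR⟩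
    rw [le_wedgeF_iff, hMg, hII (m - d) (by omega)]
    have hdm' : d + (m - d) = m := by omega
    rw [hdm']
    refine ⟨R, ?_⟩
    rw [List.append_assoc]
    congr 1
    rw [← hR, List.drop_append_of_le_length (by rw [prefixList_length]; omega)]
  -- Prefixes of `W'` as group elements.
  have hIV : ∀ t, 1 ≤ t → wordPrefix W' (k + t) = U * wordPrefix W (d + t) := by
    intro t ht
    apply FreeGroup.toWord_injective
    have hpre : prefixList W (d + t) <+: (wordPrefix W (d + t)).toWord := by
      rw [toWord_wordPrefix]
    have := hM (wordPrefix W (d + t)) (d + t) (by omega) hpre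
    rw [toWord_wordPrefix] at this
    rw [this, toWord_wordPrefix, hII t ht]
  -- Assembly.
  have hT : Tendsto (fun j : ℕ => d + (j - k)) atTop atTop :=
    tendsto_atTop_mono (fun j => Nat.le_add_left _ _) (tendsto_sub_atTop_nat k)
  have hbound : ∀ j, k + 1 ≤ j → d + 1 ≤ wedgeF W (φ (wordPrefix W (d + (j - k)))) →
      k + (wedgeF W (φ (wordPrefix W (d + (j - k)))) - d) ≤
        wedgeF W' (φ (wordPrefix W' j)) := by
    intro j hj hm
    have hphi : φ (wordPrefix W' j) = U * φ (wordPrefix W (d + (j - k))) := by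
      rw [show j = k + (j - k) by omega, hIV (j - k) (by omega), map_mul, hUfix, Nat.add_sub_cancel_left]
    rw [hphi]
    exact hIII _ _ (by omega) le_rfl
  have hE : ∀ᶠ j : ℕ in atTop,
      k + 1 ≤ j ∧ d + 1 ≤ wedgeF W (φ (wordPrefix W (d + (j - k)))) :=
    (eventually_ge_atTop (k + 1)).and ((hWfix.comp hT).eventually_ge_atTop (d + 1))
  constructor
  · show Tendsto (fun j => wedgeF W' (φ (wordPrefix W' j))) atTop atTop
    refine tendsto_atTop_mono' atTop ?_
      ((tendsto_sub_atTop_nat d).comp (hWfix.comp hT))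
    filter_upwards [hE] with j hj
    have h1 := hbound j hj.1 hj.2
    simp only [Function.comp_apply]
    omega
  · show Tendsto (fun j => (wedgeF W' (φ (wordPrefix W' j)) : ℤ) - (j : ℤ)) atTop atTop
    refine tendsto_atTop_mono' atTop ?_ (hWatt.comp hT)
    filter_upwards [hE] with j hj
    have h1 := hbound j hj.1 hj.2
    simp only [Function.comp_apply]
    have hj1 := hj.1
    have hj2 := hj.2
    push_cast
    omega

end ZZFix
end

section
/- Let φ be the endomorphism of the free group F_n with basis a_1, ..., a_n defined by φ(a_i) = a_i^2 for every i. Then φ is injective, fix(φ) is the trivial subgroup, each of the 2n infinite reduced words a_i a_i a_i ⋯ and a_i^{-1} a_i^{-1} a_i^{-1} ⋯ (i = 1, ..., n) is an attracting fixed word of φ, these represent pairwise distinct equivalence classes, and a(φ) = 2n. -/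
open Filter

namespace ZZFix

variable {α : Type*} [DecidableEq α]

section Aux
set_option linter.unusedSectionVars false
variable {α : Type*} [DecidableEq α]

@[simp] lemma cpl_nil_left (b : List α) : commonPrefixLength ([] : List α) b = 0 := by
  cases b <;> rfl
@[simp] lemma cpl_nil_right (a : List α) : commonPrefixLength a ([] : List α) = 0 := by
  cases a <;> rfl
lemma cpl_cons (x y : α) (xs ys : List α) : commonPrefixLength (x :: xs) (y :: ys) =
    if x = y then commonPrefixLength xs ys + 1 else 0 := rfl

/-- A finite word is reduced. -/
def RedW (L : List (Letter α)) : Prop := List.Chain' (fun a b => b ≠ linv a) L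

lemma ne_linv_self (x : Letter α) : x ≠ linv x := fun h => by
  have := congrArg Prod.snd h
  simp [linv] at this

lemma reduce_eq_self : ∀ {L : List (Letter α)}, RedW L → FreeGroup.reduce L = L
  | [], _ => rfl
  | x :: xs, h => by
    have hxs : FreeGroup.reduce xs = xs := reduce_eq_self (List.isChain_cons.1 h).2
    rw [FreeGroup.reduce.cons, hxs]
    cases xs with
    | nil => rfl
    | cons hd tl =>
      have hne : hd ≠ linv x := (List.isChain_cons_cons.1 h).1
      have : ¬(x.1 = hd.1 ∧ x.2 = !hd.2) := by
        rintro ⟨h1, h2⟩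
        exact hne (Prod.ext h1.symm (by simp [h2, linv]))
      simp only [this, if_false]

lemma not_redW_decomp : ∀ {M : List (Letter α)}, ¬ RedW M →
    ∃ (L₂ : List (Letter α)) (x : α) (b : Bool) (L₃ : List (Letter α)),
      M = L₂ ++ (x, b) :: (x, !b) :: L₃
  | [], h => absurd List.isChain_nil h
  | [_], h => absurd (List.isChain_singleton _) h
  | a :: c :: t, h => by
    rw [RedW, List.Chain', List.isChain_cons_cons] at h
    push_neg at h
    by_cases hc : c = linv a
    · exact ⟨[], a.1, a.2, t, by simp [hc, linv]⟩
    · obtain ⟨L₂, x, b, L₃, hM⟩ := not_redW_decomp (h hc)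
      exact ⟨a :: L₂, x, b, L₃, by simp [hM]⟩

lemma redW_reduce (L : List (Letter α)) : RedW (FreeGroup.reduce L) := by
  by_contra h
  obtain ⟨L₂, x, b, L₃, hM⟩ := not_redW_decomp h
  exact FreeGroup.reduce.not hM

lemma redW_toWord (g : FreeGroup α) : RedW (FreeGroup.toWord g) := by
  rw [← FreeGroup.reduce_toWord]; exact redW_reduce _

/-- duplicate every letter of a word -/
def dup (L : List (Letter α)) : List (Letter α) := L.flatMap (fun x => [x, x])

@[simp] lemma dup_nil : dup ([] : List (Letter α)) = [] := rfl
@[simp] lemma dup_cons (x : Letter α) (xs : List (Letter α)) :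
    dup (x :: xs) = x :: x :: dup xs := rfl

@[simp] lemma length_dup (L : List (Letter α)) : (dup L).length = 2 * L.length := by
  induction L with
  | nil => rfl
  | cons x xs ih => simp [ih]; ring

lemma dup_replicate (k : ℕ) (l : Letter α) :
    dup (List.replicate k l) = List.replicate (2 * k) l := by
  induction k with
  | zero => rfl
  | succ k ih =>
    rw [List.replicate_succ, dup_cons, ih]
    rw [show 2 * (k + 1) = (2 * k) + 1 + 1 by ring, List.replicate_succ,
      List.replicate_succ]

lemma redW_dup : ∀ {L : List (Letter α)}, RedW L → RedW (dup L)
  | [], _ => List.isChain_nil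
  | [x], _ => by
    rw [dup_cons, dup_nil, RedW, List.Chain', List.isChain_cons_cons]
    exact ⟨ne_linv_self x, List.isChain_singleton x⟩
  | x :: y :: t, h => by
    have h1 : y ≠ linv x := (List.isChain_cons_cons.1 h).1
    have ih := redW_dup (L := y :: t) (List.isChain_cons_cons.1 h).2
    show List.Chain' (fun a b => b ≠ linv a) (x :: x :: y :: y :: dup t)
    rw [List.Chain', List.isChain_cons_cons, List.isChain_cons_cons]
    refine ⟨ne_linv_self x, h1, ?_⟩
    rw [dup_cons] at ih
    exact ih

lemma dup_getElem? : ∀ (L : List (Letter α)) (k : ℕ), (dup L)[k]? = L[k / 2]?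
  | [], k => by simp
  | x :: xs, 0 => by simp
  | x :: xs, 1 => by simp
  | x :: xs, (k + 2) => by
    rw [dup_cons]
    have : (k + 2) / 2 = k / 2 + 1 := by omega
    rw [this]
    simpa using dup_getElem? xs k

lemma dup_injective : Function.Injective (dup (α := α)) := by
  intro a b h
  apply List.ext_getElem?
  intro k
  have := congrArg (fun L => L[2 * k]?) h
  simpa [dup_getElem?, Nat.mul_div_cancel_left k (by norm_num : 0 < 2)] using this

@[simp] lemma length_prefixList {W : InfWord α} (i : ℕ) : (prefixList W i).length = i := by
  simp [prefixList]

lemma prefixList_getElem? {W : InfWord α} {i k : ℕ} (hk : k < i) :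
    (prefixList W i)[k]? = some (W.1 k) := by
  simp [prefixList, List.getElem?_map, List.getElem?_range hk]

lemma redW_prefixList (W : InfWord α) (i : ℕ) : RedW (prefixList W i) := by
  rw [RedW, List.Chain', List.isChain_iff_getElem]
  intro j hj
  simp only [length_prefixList] at hj
  have h1 : j < i := by omega
  have h2 : j + 1 < i := by omega
  have g1 : (prefixList W i)[j]'(by simpa using h1) = W.1 j := by
    simp [prefixList]
  have g2 : (prefixList W i)[j + 1]'(by simpa using h2) = W.1 (j + 1) := by
    simp [prefixList]
  rw [g1, g2]
  exact W.2 j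

lemma cpl_self : ∀ (a : List α), commonPrefixLength a a = a.length
  | [] => rfl
  | x :: xs => by rw [cpl_cons, if_pos rfl, cpl_self xs]; rfl

lemma cpl_le_left : ∀ (a b : List α), commonPrefixLength a b ≤ a.length
  | [], b => by simp
  | x :: xs, [] => by simp
  | x :: xs, y :: ys => by
    rw [cpl_cons]
    split_ifs
    · simpa using cpl_le_left xs ys
    · simp

lemma cpl_getElem? : ∀ (a b : List α) (k : ℕ), k < commonPrefixLength a b → a[k]? = b[k]?
  | [], b, k => by simp
  | x :: xs, [], k => by simp
  | x :: xs, y :: ys, k => by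
    rw [cpl_cons]
    split_ifs with hxy
    · intro hk
      cases k with
      | zero => simp [hxy]
      | succ k => simpa using cpl_getElem? xs ys k (by omega)
    · omega

lemma le_cpl : ∀ {a b : List α} {k : ℕ}, k ≤ a.length → (∀ j, j < k → a[j]? = b[j]?) →
    k ≤ commonPrefixLength a b := by
  intro a
  induction a with
  | nil => intro b k hk _; have : k = 0 := by simpa using hk
           simp [this]
  | cons x xs ih =>
    intro b k hk hj
    cases k with
    | zero => omega
    | succ k =>
      have h0 : b[0]? = some x := ((hj 0 (by omega)).symm.trans (by simp))
      obtain ⟨bs, rfl⟩ : ∃ bs, b = x :: bs := by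
        cases b with
        | nil => simp at h0
        | cons y ys =>
          simp only [List.getElem?_cons_zero, Option.some.injEq] at h0
          exact ⟨ys, by rw [h0]⟩
      rw [cpl_cons, if_pos rfl]
      have : k ≤ commonPrefixLength xs bs := by
        apply ih (by simpa using hk)
        intro j hjk
        simpa using hj (j + 1) (by omega)
      omega

end Aux

section Main
set_option linter.unusedSectionVars false
variable {α : Type*} [DecidableEq α]

lemma phi_single (φ : FreeGroup α →* FreeGroup α)
    (hφ : ∀ x : α, φ (FreeGroup.of x) = FreeGroup.of x ^ 2) (a : α) (b : Bool) :
    φ (FreeGroup.mk [(a, b)]) = FreeGroup.mk [(a, b), (a, b)] := by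
  have hof : (FreeGroup.of a : FreeGroup α) = FreeGroup.mk [(a, true)] := rfl
  have hsq : (FreeGroup.of a : FreeGroup α) ^ 2 = FreeGroup.mk [(a, true), (a, true)] := by
    rw [pow_two, hof, FreeGroup.mul_mk]; rfl
  cases b with
  | true => rw [← hof, hφ, hsq]
  | false =>
    have hinv : FreeGroup.mk [(a, false)] = (FreeGroup.of a)⁻¹ := by
      rw [hof, FreeGroup.inv_mk]; simp [FreeGroup.invRev]
    rw [hinv, map_inv, hφ, hsq, FreeGroup.inv_mk]
    simp [FreeGroup.invRev]

lemma phi_mk (φ : FreeGroup α →* FreeGroup α)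
    (hφ : ∀ x : α, φ (FreeGroup.of x) = FreeGroup.of x ^ 2) :
    ∀ L : List (Letter α), φ (FreeGroup.mk L) = FreeGroup.mk (dup L)
  | [] => by rw [← FreeGroup.one_eq_mk, map_one, dup_nil, FreeGroup.one_eq_mk]
  | x :: xs => by
    have : FreeGroup.mk (x :: xs) = FreeGroup.mk [x] * FreeGroup.mk xs := by
      rw [FreeGroup.mul_mk]; rfl
    rw [this, map_mul, phi_mk φ hφ xs, phi_single φ hφ x.1 x.2, FreeGroup.mul_mk]
    rfl

lemma toWord_phi (φ : FreeGroup α →* FreeGroup α)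
    (hφ : ∀ x : α, φ (FreeGroup.of x) = FreeGroup.of x ^ 2) (g : FreeGroup α) :
    (φ g).toWord = dup g.toWord := by
  conv_lhs => rw [← FreeGroup.mk_toWord (x := g)]
  rw [phi_mk φ hφ, FreeGroup.toWord_mk, reduce_eq_self (redW_dup (redW_toWord g))]

lemma phi_injective (φ : FreeGroup α →* FreeGroup α)
    (hφ : ∀ x : α, φ (FreeGroup.of x) = FreeGroup.of x ^ 2) :
    Function.Injective φ := fun g h H =>
  FreeGroup.toWord_injective (dup_injective
    (by rw [← toWord_phi φ hφ, ← toWord_phi φ hφ, H]))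

lemma fixed_bot (φ : FreeGroup α →* FreeGroup α)
    (hφ : ∀ x : α, φ (FreeGroup.of x) = FreeGroup.of x ^ 2) :
    fixedSubgroup φ = ⊥ := by
  ext g
  rw [Subgroup.mem_bot]
  constructor
  · intro hg
    have hg' : φ g = g := hg
    have h2 : dup g.toWord = g.toWord := by rw [← toWord_phi φ hφ, hg']
    have hlen := congrArg List.length h2
    rw [length_dup] at hlen
    have : g.toWord = [] := List.length_eq_zero_iff.1 (by omega)
    exact FreeGroup.toWord_eq_nil_iff.1 this
  · rintro rfl
    exact (map_one φ : φ 1 = 1)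

lemma prefixList_constWord (l : Letter α) (i : ℕ) :
    prefixList (constWord l) i = List.replicate i l := by
  simp [prefixList, constWord, List.map_const']

lemma wedgeF_wordPrefix (V W : InfWord α) (i : ℕ) :
    wedgeF V (wordPrefix W i) = commonPrefixLength (prefixList V i) (prefixList W i) := by
  rw [wedgeF, toWord_wordPrefix, length_prefixList]

lemma wedge_const (φ : FreeGroup α →* FreeGroup α)
    (hφ : ∀ x : α, φ (FreeGroup.of x) = FreeGroup.of x ^ 2) (l : Letter α) (m : ℕ) :
    wedgeF (constWord l) (φ (wordPrefix (constWord l) m)) = 2 * m := by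
  have h1 : (φ (wordPrefix (constWord l) m)).toWord = List.replicate (2 * m) l := by
    rw [toWord_phi φ hφ, toWord_wordPrefix, prefixList_constWord, dup_replicate]
  rw [wedgeF, h1, List.length_replicate, prefixList_constWord, cpl_self,
    List.length_replicate]

lemma attracting_const (φ : FreeGroup α →* FreeGroup α)
    (hφ : ∀ x : α, φ (FreeGroup.of x) = FreeGroup.of x ^ 2) (l : Letter α) :
    IsAttractingFixedWord φ (constWord l) := by
  constructor
  · rw [IsFixedInfWord]
    refine tendsto_atTop_mono (fun m => ?_) tendsto_id
    rw [wedge_const φ hφ]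
    simp only [id_eq]
    omega
  · refine Tendsto.congr (f₁ := fun m : ℕ => (m : ℤ)) (fun m => ?_)
      tendsto_natCast_atTop_atTop
    rw [wedge_const φ hφ]
    push_cast
    ring

lemma const_of_fixed (φ : FreeGroup α →* FreeGroup α)
    (hφ : ∀ x : α, φ (FreeGroup.of x) = FreeGroup.of x ^ 2) {W : InfWord α}
    (hW : IsFixedInfWord φ W) : ∀ k, W.1 k = W.1 0 := by
  have key : ∀ k, W.1 k = W.1 (k / 2) := by
    intro k
    obtain ⟨i, hi⟩ := (hW.eventually (eventually_gt_atTop k)).exists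
    have htw : (φ (wordPrefix W i)).toWord = dup (prefixList W i) := by
      rw [toWord_phi φ hφ, toWord_wordPrefix]
    rw [wedgeF, htw] at hi
    have hlen : (dup (prefixList W i)).length = 2 * i := by
      rw [length_dup, length_prefixList]
    rw [hlen] at hi
    have hk2i : k < 2 * i := by
      have h3 := cpl_le_left (prefixList W (2 * i)) (dup (prefixList W i))
      rw [length_prefixList] at h3
      omega
    have heq := cpl_getElem? _ _ k hi
    rw [prefixList_getElem? hk2i, dup_getElem?, prefixList_getElem? (by omega)] at heq
    exact Option.some_injective _ heq
  intro k
  induction k using Nat.strong_induction_on with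
  | _ k ih =>
    match k with
    | 0 => rfl
    | k + 1 =>
      rw [key (k + 1)]
      exact ih ((k + 1) / 2) (by omega)

lemma eq_constWord {W : InfWord α} (h : ∀ k, W.1 k = W.1 0) :
    W = constWord (W.1 0) :=
  Subtype.ext (funext fun k => h k)

lemma equiv_iff_eq (φ : FreeGroup α →* FreeGroup α)
    (hfix : fixedSubgroup φ = ⊥) (W W' : InfWord α) :
    EquivFixedWords φ W W' ↔ W = W' := by
  constructor
  · rintro ⟨U, hU, hconv⟩
    rw [hfix, Subgroup.mem_bot] at hU
    subst hU
    simp only [ConvergesTo, one_mul] at hconv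
    by_contra hne
    have hex : ∃ k, W.1 k ≠ W'.1 k := by
      by_contra hall
      push_neg at hall
      exact hne (Subtype.ext (funext hall))
    obtain ⟨k, hk⟩ := hex
    have hbound : ∀ i, wedgeF W' (wordPrefix W i) ≤ k := by
      intro i
      by_contra hgt
      push_neg at hgt
      rw [wedgeF_wordPrefix] at hgt
      have hki : k < i := by
        have := cpl_le_left (prefixList W' i) (prefixList W i)
        rw [length_prefixList] at this
        omega
      have heq := cpl_getElem? _ _ k hgt
      rw [prefixList_getElem? hki, prefixList_getElem? hki] at heq
      exact hk (Option.some_injective _ heq).symm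
    obtain ⟨i, hi⟩ := (hconv.eventually (eventually_gt_atTop k)).exists
    exact absurd (hbound i) (by omega)
  · rintro rfl
    refine ⟨1, one_mem _, ?_⟩
    simp only [ConvergesTo, one_mul]
    refine Tendsto.congr (f₁ := fun i : ℕ => i) (fun i => ?_) tendsto_id
    rw [wedgeF_wordPrefix, cpl_self, length_prefixList]

end Main

/-- Example 6.1: for `φ(a_i) = a_i²`, `φ` is injective, its fixed
subgroup is trivial, each `a_i^{±∞}` is an attracting fixed word, these are pairwise
inequivalent, and `a(φ) = 2n`. -/
theorem stmt14 {n : ℕ} (hn : 1 ≤ n) (φ : FreeGroup (Fin n) →* FreeGroup (Fin n))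
    (hφdef : ∀ i : Fin n, φ (FreeGroup.of i) = FreeGroup.of i ^ 2) :
    Function.Injective φ ∧
    fixedSubgroup φ = ⊥ ∧
    (∀ (i : Fin n) (b : Bool), IsAttractingFixedWord φ (constWord (i, b))) ∧
    (∀ (i j : Fin n) (b b' : Bool), (i, b) ≠ (j, b') →
      ¬ EquivFixedWords φ (constWord (i, b)) (constWord (j, b'))) ∧
    aCard φ = 2 * (n : ℕ∞) := by
  have hφ : ∀ x : Fin n, φ (FreeGroup.of x) = FreeGroup.of x ^ 2 := hφdef
  have hfix := fixed_bot φ hφ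
  have hattr : ∀ l : Letter (Fin n), IsAttractingFixedWord φ (constWord l) :=
    attracting_const φ hφ
  refine ⟨phi_injective φ hφ, hfix, fun i b => hattr (i, b), ?_, ?_⟩
  · intro i j b b' hne hEq
    rw [equiv_iff_eq φ hfix] at hEq
    exact hne (congrArg (fun W : InfWord (Fin n) => W.1 0) hEq)
  · have e1 : (Quot fun (W W' : {W : InfWord (Fin n) // IsAttractingFixedWord φ W}) =>
        EquivFixedWords φ W.1 W'.1) ≃ {W : InfWord (Fin n) // IsAttractingFixedWord φ W} :=
      { toFun := Quot.lift id (fun a b h => Subtype.ext ((equiv_iff_eq φ hfix _ _).1 h))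
        invFun := Quot.mk _
        left_inv := fun q => Quot.inductionOn q fun _ => rfl
        right_inv := fun _ => rfl }
    have e2 : {W : InfWord (Fin n) // IsAttractingFixedWord φ W} ≃ Letter (Fin n) :=
      { toFun := fun W => W.1.1 0
        invFun := fun l => ⟨constWord l, hattr l⟩
        left_inv := fun W => Subtype.ext (eq_constWord (const_of_fixed φ hφ W.2.1)).symm
        right_inv := fun _ => rfl }
    rw [aCard, ENat.card_congr (e1.trans e2), ENat.card_eq_coe_fintype_card]
    rw [Fintype.card_prod, Fintype.card_fin, Fintype.card_bool]
    push_cast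
    ring

end ZZFix
end
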